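/- Let m ≤ n, λ > 0, and Z ∈ ℝ^{m×n} with singular value decomposition Z = U Σ Vᵀ, where Σ = diag(σ₁, …, σ_m) with σ₁ ≥ ⋯ ≥ σ_m ≥ 0, U ∈ ℝ^{m×m} and V ∈ ℝ^{n×m} having orthonormal columns. Define w ∈ ℝ^m by w_i = max(σ_i − λ, 0), and suppose w ≠ 0. Then X* = U · diag((1 + λ/‖w‖₂)·w) · Vᵀ is a global minimizer over X ∈ ℝ^{m×n} of Ψ(X) = (1/2)‖X − Z‖_F² + λ(‖X‖_* − ‖X‖_F). -/

import Mathlib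

open Matrix

/-- Nuclear norm of a real `m × n` matrix: the sum of its singular values, i.e. the
sum of the square roots of the eigenvalues of `X Xᵀ`. -/
noncomputable def nuclearNorm {m n : ℕ} (X : Matrix (Fin m) (Fin n) ℝ) : ℝ :=
  ∑ i, Real.sqrt ((Matrix.isHermitian_mul_conjTranspose_self X).eigenvalues i)

/-- Frobenius norm of a real `m × n` matrix. -/
noncomputable def frobNorm {m n : ℕ} (X : Matrix (Fin m) (Fin n) ℝ) : ℝ :=
  Real.sqrt (∑ i, ∑ j, (X i j) ^ 2)

section Helpers
open Matrix Polynomial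

lemma mul_cancel_left' {α β γ : Type*} [Fintype α] [Fintype β] [DecidableEq α]
    (A : Matrix α β ℝ) (B : Matrix β α ℝ) (h : A * B = 1) (M : Matrix α γ ℝ) :
    A * (B * M) = M := by
  rw [← Matrix.mul_assoc, h, Matrix.one_mul]

lemma cs_abs {m : ℕ} (f g : Fin m → ℝ) :
    (∑ i, |f i| * |g i|) ≤ Real.sqrt (∑ i, (f i)^2) * Real.sqrt (∑ i, (g i)^2) := by
  have h := Finset.sum_mul_sq_le_sq_mul_sq Finset.univ (fun i => |f i|) (fun i => |g i|)
  simp only [sq_abs] at h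
  have h0 : 0 ≤ ∑ i, |f i| * |g i| :=
    Finset.sum_nonneg fun i _ => mul_nonneg (abs_nonneg _) (abs_nonneg _)
  rw [← Real.sqrt_mul (Finset.sum_nonneg fun i _ => sq_nonneg (f i))]
  rw [show ∑ i, |f i| * |g i| = Real.sqrt ((∑ i, |f i| * |g i|)^2) by
    rw [Real.sqrt_sq h0]]
  exact Real.sqrt_le_sqrt h

lemma charpoly_conj_diag {m : ℕ} (U : Matrix (Fin m) (Fin m) ℝ) (v : Fin m → ℝ)
    (hU : U * Uᵀ = 1) :
    (U * Matrix.diagonal v * Uᵀ).charpoly = ∏ i, (X - C (v i)) := by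
  have hmap : ∀ (A B : Matrix (Fin m) (Fin m) ℝ),
      (C : ℝ →+* ℝ[X]).mapMatrix (A * B) =
        (C : ℝ →+* ℝ[X]).mapMatrix A * (C : ℝ →+* ℝ[X]).mapMatrix B := fun A B =>
    _root_.map_mul _ _ _
  have hU1 : (C : ℝ →+* ℝ[X]).mapMatrix U * (C : ℝ →+* ℝ[X]).mapMatrix Uᵀ = 1 := by
    rw [← hmap, hU]; simp
  set U' := (C : ℝ →+* ℝ[X]).mapMatrix U with hU'
  set Ut' := (C : ℝ →+* ℝ[X]).mapMatrix Uᵀ with hUt'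
  have hsc : Matrix.scalar (Fin m) (X : ℝ[X]) = (X : ℝ[X]) • (1 : Matrix (Fin m) (Fin m) ℝ[X]) := by
    simp [Matrix.scalar, smul_eq_diagonal_mul]
  have hcm : charmatrix (U * Matrix.diagonal v * Uᵀ)
      = U' * charmatrix (Matrix.diagonal v) * Ut' := by
    rw [charmatrix, charmatrix, hmap, hmap, mul_sub, sub_mul, hsc]
    congr 1
    rw [mul_smul_comm, smul_mul_assoc, mul_one, hU1]
  have hdet : (U * Matrix.diagonal v * Uᵀ).charpoly = (Matrix.diagonal v).charpoly := by
    rw [Matrix.charpoly, Matrix.charpoly, hcm, Matrix.det_mul, Matrix.det_mul]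
    have : U'.det * Ut'.det = 1 := by
      rw [← Matrix.det_mul, hU1, Matrix.det_one]
    calc U'.det * (charmatrix (Matrix.diagonal v)).det * Ut'.det
        = (charmatrix (Matrix.diagonal v)).det * (U'.det * Ut'.det) := by ring
      _ = (charmatrix (Matrix.diagonal v)).det := by rw [this, mul_one]
  rw [hdet, Matrix.charpoly]
  have : charmatrix (Matrix.diagonal v) = Matrix.diagonal (fun i => (X : ℝ[X]) - C (v i)) := by
    ext i j
    by_cases h : i = j
    · subst h; simp [charmatrix_apply_eq]
    · simp [charmatrix_apply_ne _ _ _ h, Matrix.diagonal_apply_ne _ h]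
  rw [this, Matrix.det_diagonal]


lemma sum_f_eigenvalues {m : ℕ} (U H : Matrix (Fin m) (Fin m) ℝ) (v : Fin m → ℝ)
    (hU : U * Uᵀ = 1) (hH : H = U * Matrix.diagonal v * Uᵀ)
    (hHerm : H.IsHermitian) (f : ℝ → ℝ) :
    ∑ i, f (hHerm.eigenvalues i) = ∑ i, f (v i) := by
  set W := (Matrix.IsHermitian.eigenvectorUnitary hHerm : Matrix (Fin m) (Fin m) ℝ) with hWdef
  have hWmem := (Matrix.IsHermitian.eigenvectorUnitary hHerm).2
  have hWW : W * Wᵀ = 1 := by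
    have := (Matrix.mem_unitaryGroup_iff).mp hWmem
    simpa [Matrix.star_eq_conjTranspose, Matrix.conjTranspose_eq_transpose_of_trivial] using this
  have hspec : H = W * Matrix.diagonal hHerm.eigenvalues * Wᵀ := by
    have := hHerm.spectral_theorem
    simpa [Matrix.star_eq_conjTranspose, Matrix.conjTranspose_eq_transpose_of_trivial,
      Function.comp] using this
  have h1 : H.charpoly = ∏ i, (X - C (hHerm.eigenvalues i)) := by
    have h := charpoly_conj_diag W hHerm.eigenvalues hWW
    rw [← hspec] at h; exact h
  have h2 : H.charpoly = ∏ i, (X - C (v i)) := by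
    rw [hH]; exact charpoly_conj_diag U v hU
  have hms : (Finset.univ.val.map hHerm.eigenvalues) = Finset.univ.val.map v := by
    have hprod : ((Finset.univ.val.map hHerm.eigenvalues).map (fun a => X - C a)).prod
        = ((Finset.univ.val.map v).map (fun a => X - C a)).prod := by
      rw [Multiset.map_map, Multiset.map_map, ← Finset.prod_eq_multiset_prod,
        ← Finset.prod_eq_multiset_prod]
      exact (h1.symm.trans h2 : _)
    have := congrArg Polynomial.roots hprod
    rwa [Polynomial.roots_multiset_prod_X_sub_C, Polynomial.roots_multiset_prod_X_sub_C] at this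
  rw [Finset.sum_eq_multiset_sum, Finset.sum_eq_multiset_sum,
    show (fun i => f (hHerm.eigenvalues i)) = f ∘ hHerm.eigenvalues from rfl,
    show (fun i => f (v i)) = f ∘ v from rfl,
    ← Multiset.map_map, ← Multiset.map_map, hms]



lemma trace_mul_transpose {m n : ℕ} (A B : Matrix (Fin m) (Fin n) ℝ) :
    Matrix.trace (A * Bᵀ) = ∑ i, ∑ j, A i j * B i j := by
  simp [Matrix.trace, Matrix.diag, Matrix.mul_apply]

lemma sum_sq_eq_trace {m n : ℕ} (M : Matrix (Fin m) (Fin n) ℝ) :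
    ∑ i, ∑ j, (M i j)^2 = Matrix.trace (M * Mᵀ) := by
  rw [trace_mul_transpose]; simp [sq]

lemma frob_UDV {m n : ℕ} (U : Matrix (Fin m) (Fin m) ℝ) (V : Matrix (Fin n) (Fin m) ℝ)
    (hU : Uᵀ * U = 1) (hV : Vᵀ * V = 1) (d : Fin m → ℝ) :
    ∑ i, ∑ j, ((U * Matrix.diagonal d * Vᵀ) i j)^2 = ∑ i, (d i)^2 := by
  rw [sum_sq_eq_trace]
  have key : (U * Matrix.diagonal d * Vᵀ) * (U * Matrix.diagonal d * Vᵀ)ᵀ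
      = U * ((Matrix.diagonal d * Matrix.diagonal d) * Uᵀ) := by
    rw [Matrix.transpose_mul, Matrix.transpose_mul, Matrix.transpose_transpose,
      Matrix.diagonal_transpose]
    simp only [Matrix.mul_assoc]
    rw [mul_cancel_left' Vᵀ V hV]
  rw [key, Matrix.trace_mul_comm, Matrix.mul_assoc, hU, Matrix.mul_one,
    Matrix.diagonal_mul_diagonal, Matrix.trace_diagonal]
  simp [sq]

lemma inner_UDV {m n : ℕ} (U : Matrix (Fin m) (Fin m) ℝ) (V : Matrix (Fin n) (Fin m) ℝ)
    (σ : Fin m → ℝ) (Y : Matrix (Fin m) (Fin n) ℝ) :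
    ∑ i, ∑ j, Y i j * (U * Matrix.diagonal σ * Vᵀ) i j
      = ∑ i, σ i * (Uᵀ * Y * V) i i := by
  rw [← trace_mul_transpose]
  rw [Matrix.transpose_mul, Matrix.transpose_mul, Matrix.transpose_transpose,
    Matrix.diagonal_transpose]
  have h2 : Y * (V * (Matrix.diagonal σ * Uᵀ)) = (Y * V * Matrix.diagonal σ) * Uᵀ := by
    simp only [Matrix.mul_assoc]
  rw [h2, Matrix.trace_mul_comm]
  have h3 : Uᵀ * (Y * V * Matrix.diagonal σ) = (Uᵀ * Y * V) * Matrix.diagonal σ := by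
    simp only [Matrix.mul_assoc]
  rw [h3]
  simp [Matrix.trace, Matrix.diag, Matrix.mul_diagonal, mul_comm]

lemma trace_transpose_mul_self_nonneg {m n : ℕ} (B : Matrix (Fin m) (Fin n) ℝ) :
    0 ≤ Matrix.trace (B * Bᵀ) := by
  rw [← sum_sq_eq_trace]
  positivity

lemma diag_sq_le {m n : ℕ} (U : Matrix (Fin m) (Fin m) ℝ) (V : Matrix (Fin n) (Fin m) ℝ)
    (hU : Uᵀ * U = 1) (hV : Vᵀ * V = 1) (Y : Matrix (Fin m) (Fin n) ℝ) :
    ∑ i, ((Uᵀ * Y * V) i i)^2 ≤ ∑ i, ∑ j, (Y i j)^2 := by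
  have hUU : U * Uᵀ = 1 := mul_eq_one_comm.mp hU
  have step1 : ∑ i, ((Uᵀ * Y * V) i i)^2 ≤ ∑ i, ∑ k, ((Uᵀ * Y * V) i k)^2 := by
    apply Finset.sum_le_sum
    intro i _
    exact Finset.single_le_sum (f := fun k => ((Uᵀ * Y * V) i k)^2)
      (fun k _ => sq_nonneg _) (Finset.mem_univ i)
  refine step1.trans ?_
  rw [sum_sq_eq_trace, sum_sq_eq_trace]
  have hA : (Uᵀ * Y * V) * (Uᵀ * Y * V)ᵀ = Uᵀ * (Y * (V * (Vᵀ * Yᵀ)) * U) := by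
    rw [Matrix.transpose_mul, Matrix.transpose_mul, Matrix.transpose_transpose]
    simp only [Matrix.mul_assoc]
  rw [hA, Matrix.trace_mul_comm]
  have hA2 : Y * (V * (Vᵀ * Yᵀ)) * U * Uᵀ = Y * (V * (Vᵀ * Yᵀ)) := by
    rw [Matrix.mul_assoc, hUU, Matrix.mul_one]
  rw [hA2]
  set Q : Matrix (Fin n) (Fin n) ℝ := 1 - V * Vᵀ with hQ
  have hQsymm : Qᵀ = Q := by
    rw [hQ, Matrix.transpose_sub, Matrix.transpose_one, Matrix.transpose_mul,
      Matrix.transpose_transpose]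
  have hQidem : Q * Q = Q := by
    rw [hQ]
    have hPP : (V * Vᵀ) * (V * Vᵀ) = V * Vᵀ := by
      rw [Matrix.mul_assoc, mul_cancel_left' Vᵀ V hV]
    rw [Matrix.mul_sub, Matrix.sub_mul, Matrix.sub_mul, Matrix.mul_one, Matrix.one_mul, hPP,
      Matrix.mul_one]
    abel
  have key : Matrix.trace (Y * Yᵀ) - Matrix.trace (Y * (V * (Vᵀ * Yᵀ)))
      = Matrix.trace ((Y * Q) * (Y * Q)ᵀ) := by
    rw [Matrix.transpose_mul, hQsymm]
    have h5 : Y * Q * (Q * Yᵀ) = Y * (Q * Yᵀ) := by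
      rw [Matrix.mul_assoc, ← Matrix.mul_assoc Q Q Yᵀ, hQidem]
    rw [h5, hQ, Matrix.sub_mul, Matrix.one_mul, Matrix.mul_sub, Matrix.trace_sub,
      Matrix.mul_assoc]
  have hnn := trace_transpose_mul_self_nonneg (Y * Q)
  linarith [key]

lemma nuclear_ge {m n : ℕ} (U : Matrix (Fin m) (Fin m) ℝ) (V : Matrix (Fin n) (Fin m) ℝ)
    (hU : Uᵀ * U = 1) (hV : Vᵀ * V = 1) (Y : Matrix (Fin m) (Fin n) ℝ) :
    ∑ i, |(Uᵀ * Y * V) i i| ≤ nuclearNorm Y := by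
  have hUU : U * Uᵀ = 1 := mul_eq_one_comm.mp hU
  have hH := Matrix.isHermitian_mul_conjTranspose_self Y
  set μ := hH.eigenvalues with hμdef
  have hμnn : ∀ k, 0 ≤ μ k := (Matrix.posSemidef_self_mul_conjTranspose Y).eigenvalues_nonneg
  set W := (Matrix.IsHermitian.eigenvectorUnitary hH : Matrix (Fin m) (Fin m) ℝ) with hWdef
  have hWmem := (Matrix.IsHermitian.eigenvectorUnitary hH).2
  have hWW : W * Wᵀ = 1 := by
    have := (Matrix.mem_unitaryGroup_iff).mp hWmem
    rw [Matrix.star_eq_conjTranspose, Matrix.conjTranspose_eq_transpose_of_trivial W] at this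
    exact this
  have hWtW : Wᵀ * W = 1 := mul_eq_one_comm.mp hWW
  have hYH : Yᴴ = Yᵀ := Matrix.conjTranspose_eq_transpose_of_trivial Y
  have hspec : Y * Yᵀ = W * Matrix.diagonal μ * Wᵀ := by
    have h := hH.spectral_theorem
    rw [← hYH]
    rw [h, Unitary.conjStarAlgAut_apply, Matrix.star_eq_conjTranspose,
      Matrix.conjTranspose_eq_transpose_of_trivial W]
    rfl
  set C := Wᵀ * Y with hCdef
  have hCC : C * Cᵀ = Matrix.diagonal μ := by
    rw [hCdef, Matrix.transpose_mul, Matrix.transpose_transpose]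
    calc Wᵀ * Y * (Yᵀ * W) = Wᵀ * (Y * Yᵀ * W) := by simp only [Matrix.mul_assoc]
      _ = Matrix.diagonal μ := by
          rw [hspec]
          simp only [Matrix.mul_assoc]
          rw [hWtW, Matrix.mul_one, mul_cancel_left' Wᵀ W hWtW]
  set G := Uᵀ * W with hGdef
  have hGcol : ∀ k, ∑ i, (G i k)^2 = 1 := by
    intro k
    have hGG : Gᵀ * G = 1 := by
      rw [hGdef, Matrix.transpose_mul, Matrix.transpose_transpose]
      calc Wᵀ * U * (Uᵀ * W) = Wᵀ * (U * Uᵀ * W) := by simp only [Matrix.mul_assoc]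
        _ = 1 := by rw [hUU, Matrix.one_mul, hWtW]
    have := congrArg (fun M => M k k) hGG
    simpa [Matrix.mul_apply, sq] using this
  set T := C * V with hTdef
  have hdiagBB : ∀ (B : Matrix (Fin m) (Fin n) ℝ) (k : Fin m), 0 ≤ (B * Bᵀ) k k := by
    intro B k
    simp only [Matrix.mul_apply, Matrix.transpose_apply]
    exact Finset.sum_nonneg fun j _ => mul_self_nonneg _
  have hT : ∀ k, ∑ i, (T k i)^2 ≤ μ k := by
    intro k
    have h1 : ∑ i, (T k i)^2 = (T * Tᵀ) k k := by
      simp [Matrix.mul_apply, sq]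
    have h2 : (T * Tᵀ) k k = (C * (V * Vᵀ) * Cᵀ) k k := by
      rw [hTdef, Matrix.transpose_mul]
      congr 1
      simp only [Matrix.mul_assoc]
    set Q : Matrix (Fin n) (Fin n) ℝ := 1 - V * Vᵀ with hQ
    have hQsymm : Qᵀ = Q := by
      rw [hQ, Matrix.transpose_sub, Matrix.transpose_one, Matrix.transpose_mul,
        Matrix.transpose_transpose]
    have hQidem : Q * Q = Q := by
      rw [hQ]
      have hPP : (V * Vᵀ) * (V * Vᵀ) = V * Vᵀ := by
        rw [Matrix.mul_assoc, mul_cancel_left' Vᵀ V hV]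
      rw [Matrix.mul_sub, Matrix.sub_mul, Matrix.sub_mul, Matrix.mul_one, Matrix.one_mul, hPP,
        Matrix.mul_one]
      abel
    have hsplit : (C * Cᵀ) k k - (C * (V * Vᵀ) * Cᵀ) k k = ((C * Q) * (C * Q)ᵀ) k k := by
      have : (C * Q) * (C * Q)ᵀ = C * Cᵀ - C * (V * Vᵀ) * Cᵀ := by
        rw [Matrix.transpose_mul, hQsymm]
        have h5 : C * Q * (Q * Cᵀ) = C * (Q * Cᵀ) := by
          rw [Matrix.mul_assoc, ← Matrix.mul_assoc Q Q Cᵀ, hQidem]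
        rw [h5, hQ, Matrix.sub_mul, Matrix.one_mul, Matrix.mul_sub]
        simp only [Matrix.mul_assoc]
      rw [this]
      rfl
    have hQnn := hdiagBB (C * Q) k
    have hCCkk : (C * Cᵀ) k k = μ k := by rw [hCC]; simp
    rw [h1]
    have := hsplit
    rw [hCCkk] at this
    linarith [hQnn, this]
  have hGT : ∀ i, (Uᵀ * Y * V) i i = ∑ k, G i k * T k i := by
    intro i
    have hY : Uᵀ * Y * V = G * T := by
      rw [hGdef, hTdef, hCdef]
      calc Uᵀ * Y * V = Uᵀ * (W * (Wᵀ * Y)) * V := by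
            rw [mul_cancel_left' W Wᵀ hWW]
        _ = Uᵀ * W * (Wᵀ * Y * V) := by simp only [Matrix.mul_assoc]
    rw [hY, Matrix.mul_apply]
  calc ∑ i, |(Uᵀ * Y * V) i i| = ∑ i, |∑ k, G i k * T k i| := by
        simp_rw [hGT]
    _ ≤ ∑ i, ∑ k, |G i k * T k i| :=
        Finset.sum_le_sum fun i _ => Finset.abs_sum_le_sum_abs _ _
    _ = ∑ k, ∑ i, |G i k| * |T k i| := by
        rw [Finset.sum_comm]
        simp_rw [abs_mul]
    _ ≤ ∑ k, Real.sqrt (∑ i, (G i k)^2) * Real.sqrt (∑ i, (T k i)^2) :=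
        Finset.sum_le_sum fun k _ => cs_abs (fun i => G i k) (fun i => T k i)
    _ ≤ ∑ k, Real.sqrt (μ k) := by
        apply Finset.sum_le_sum
        intro k _
        rw [hGcol k, Real.sqrt_one, one_mul]
        exact Real.sqrt_le_sqrt (hT k)
    _ = nuclearNorm Y := rfl

end Helpers


set_option maxHeartbeats 1000000 in
/-- For `m ≤ n`, `λ > 0` and `Z = U Σ Vᵀ` an SVD of `Z` with
nonincreasing nonnegative singular values `σ`, letting `w_i = max(σ_i − λ, 0)` be
nonzero, the matrix `X* = U · diag((1 + λ/‖w‖₂)·w) · Vᵀ` is a global minimizer of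
`Ψ(X) = (1/2)‖X − Z‖_F² + λ(‖X‖_* − ‖X‖_F)`. -/

theorem nuclear_minus_frobenius_prox_closed_form_nonzero
    (m n : ℕ) (hmn : m ≤ n) (lam : ℝ) (hlam : 0 < lam)
    (Z : Matrix (Fin m) (Fin n) ℝ)
    (U : Matrix (Fin m) (Fin m) ℝ) (V : Matrix (Fin n) (Fin m) ℝ)
    (σ : Fin m → ℝ)
    (hU : Uᵀ * U = 1) (hV : Vᵀ * V = 1)
    (hσa : ∀ i j : Fin m, i ≤ j → σ j ≤ σ i) (hσnn : ∀ i : Fin m, 0 ≤ σ i)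
    (hZ : Z = U * Matrix.diagonal σ * Vᵀ)
    (w : Fin m → ℝ) (hw : ∀ i : Fin m, w i = max (σ i - lam) 0) (hwne : w ≠ 0)
    (Psi : Matrix (Fin m) (Fin n) ℝ → ℝ)
    (hPsi : ∀ X : Matrix (Fin m) (Fin n) ℝ, Psi X =
      (1 / 2) * (∑ i, ∑ j, (X i j - Z i j) ^ 2)
        + lam * (nuclearNorm X - frobNorm X))
    (Xstar : Matrix (Fin m) (Fin n) ℝ)
    (hXstar : Xstar =
      U * Matrix.diagonal (fun i => (1 + lam / Real.sqrt (∑ j, (w j) ^ 2)) * w i) * Vᵀ) :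
    ∀ Y : Matrix (Fin m) (Fin n) ℝ, Psi Xstar ≤ Psi Y := by
  intro Y
  have hUU : U * Uᵀ = 1 := mul_eq_one_comm.mp hU
  set nw2 := ∑ j, (w j)^2 with hnw2def
  set nw := Real.sqrt nw2 with hnwdef
  have hwnn : ∀ i, 0 ≤ w i := fun i => by rw [hw i]; exact le_max_right _ _
  have hnw2pos : 0 < nw2 := by
    obtain ⟨i, hi⟩ : ∃ i, w i ≠ 0 := by
      by_contra h
      push_neg at h
      exact hwne (funext h)
    exact Finset.sum_pos' (fun j _ => sq_nonneg _)
      ⟨i, Finset.mem_univ i, by positivity⟩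
  have hnwpos : 0 < nw := Real.sqrt_pos.mpr hnw2pos
  have hnwsq : nw^2 = nw2 := Real.sq_sqrt hnw2pos.le
  set c : ℝ := 1 + lam / nw with hcdef
  have hcpos : 0 < c := by positivity
  have hcnw : c * nw = nw + lam := by
    rw [hcdef, add_mul, one_mul, div_mul_cancel₀ _ (ne_of_gt hnwpos)]
  set d : Fin m → ℝ := fun i => c * w i with hddef
  have hdnn : ∀ i, 0 ≤ d i := fun i => mul_nonneg hcpos.le (hwnn i)
  have hwσ : ∀ i, w i * σ i = (w i)^2 + lam * w i := by
    intro i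
    rcases le_total (σ i - lam) 0 with h | h
    · rw [hw i, max_eq_right h]; ring
    · have : w i = σ i - lam := by rw [hw i, max_eq_left h]
      rw [this]; ring
  have hσw : ∀ i, σ i - lam ≤ w i := fun i => by rw [hw i]; exact le_max_left _ _
  -- Facts about Xstar
  have hXd : Xstar = U * Matrix.diagonal d * Vᵀ := by rw [hXstar]
  clear_value nw2 nw c d
  have hXZ : ∑ i, ∑ j, (Xstar i j - Z i j)^2 = ∑ i, (d i - σ i)^2 := by
    have hdiff : Xstar - Z = U * Matrix.diagonal (fun i => d i - σ i) * Vᵀ := by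
      rw [hXd, hZ, ← Matrix.sub_mul, ← Matrix.mul_sub, Matrix.diagonal_sub]
    have := frob_UDV U V hU hV (fun i => d i - σ i)
    rw [← this]
    apply Finset.sum_congr rfl
    intro i _
    apply Finset.sum_congr rfl
    intro j _
    have : Xstar i j - Z i j = (U * Matrix.diagonal (fun i => d i - σ i) * Vᵀ) i j := by
      rw [← hdiff]; rfl
    rw [this]
  have hXX : Xstar * Xstarᴴ = U * Matrix.diagonal (fun i => (d i)^2) * Uᵀ := by
    rw [Matrix.conjTranspose_eq_transpose_of_trivial, hXd, Matrix.transpose_mul,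
      Matrix.transpose_mul, Matrix.transpose_transpose, Matrix.diagonal_transpose]
    calc U * Matrix.diagonal d * Vᵀ * (V * (Matrix.diagonal d * Uᵀ))
        = U * (Matrix.diagonal d * (Vᵀ * (V * (Matrix.diagonal d * Uᵀ)))) := by
          simp only [Matrix.mul_assoc]
      _ = U * Matrix.diagonal (fun i => (d i)^2) * Uᵀ := by
          rw [mul_cancel_left' Vᵀ V hV, ← Matrix.mul_assoc (Matrix.diagonal d),
            Matrix.diagonal_mul_diagonal, ← Matrix.mul_assoc,
            show (fun i => d i * d i) = (fun i => (d i)^2) from funext fun i => (pow_two (d i)).symm]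
  have hnucX : nuclearNorm Xstar = ∑ i, d i := by
    rw [nuclearNorm, sum_f_eigenvalues U (Xstar * Xstarᴴ) (fun i => (d i)^2) hUU hXX
      (Matrix.isHermitian_mul_conjTranspose_self Xstar) Real.sqrt]
    apply Finset.sum_congr rfl
    intro i _
    rw [Real.sqrt_sq_eq_abs, abs_of_nonneg (hdnn i)]
  have hfrobX : frobNorm Xstar = c * nw := by
    rw [frobNorm]
    have h1 : ∑ i, ∑ j, (Xstar i j)^2 = ∑ i, (d i)^2 := by
      rw [hXd]; exact frob_UDV U V hU hV d
    rw [h1]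
    have h2 : ∑ i, (d i)^2 = c^2 * nw2 := by
      rw [hnw2def, Finset.mul_sum]
      apply Finset.sum_congr rfl
      intro i _
      rw [hddef]; ring
    rw [h2, show c^2 * nw2 = (c*nw)^2 by rw [mul_pow, hnwsq],
      Real.sqrt_sq (by positivity)]
  have hsumd : ∑ i, d i = c * ∑ i, w i := by
    rw [Finset.mul_sum]
    exact Finset.sum_congr rfl fun i _ => by rw [hddef]
  have hsumdsq : ∑ i, (d i - σ i)^2
      = c^2 * nw2 - 2*c*(nw2 + lam * ∑ i, w i) + ∑ i, (σ i)^2 := by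
    have : ∀ i ∈ Finset.univ, (d i - σ i)^2
        = c^2 * (w i)^2 - 2*c*((w i)^2 + lam * (w i)) + (σ i)^2 := by
      intro i _
      rw [hddef]
      simp only
      linear_combination (-2*c) * hwσ i
    rw [Finset.sum_congr rfl this, hnw2def]
    simp only [Finset.sum_add_distrib, Finset.sum_sub_distrib, ← Finset.mul_sum]
  have hPsiX : Psi Xstar = (1/2) * (∑ i, (σ i)^2) - (1/2) * (lam + nw)^2 := by
    rw [hPsi Xstar, hXZ, hnucX, hfrobX, hsumd, hsumdsq]
    have h2 : c * nw2 = (nw + lam) * nw := by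
      calc c * nw2 = (c * nw) * nw := by rw [← hnwsq]; ring
        _ = (nw + lam) * nw := by rw [hcnw]
    have h3 : c^2 * nw2 = (nw + lam)^2 := by
      calc c^2 * nw2 = (c*nw)^2 := by rw [← hnwsq]; ring
        _ = (nw + lam)^2 := by rw [hcnw]
    linear_combination (1/2) * h3 - h2 - lam * hcnw
  -- Facts about Y
  set a : Fin m → ℝ := fun i => (Uᵀ * Y * V) i i with hadef
  set S := ∑ i, ∑ j, (Y i j)^2 with hSdef
  set r := Real.sqrt S with hrdef
  have hSnn : 0 ≤ S := Finset.sum_nonneg fun i _ => Finset.sum_nonneg fun j _ => sq_nonneg _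
  have hrnn : 0 ≤ r := Real.sqrt_nonneg _
  have hrsq : r^2 = S := Real.sq_sqrt hSnn
  have hfrobY : frobNorm Y = r := by rw [frobNorm, hrdef, hSdef]
  have hexp : ∑ i, ∑ j, (Y i j - Z i j)^2
      = S - 2 * (∑ i, ∑ j, Y i j * Z i j) + ∑ i, ∑ j, (Z i j)^2 := by
    rw [hSdef]
    calc ∑ i, ∑ j, (Y i j - Z i j)^2
        = ∑ i, ∑ j, ((Y i j)^2 - 2*(Y i j * Z i j) + (Z i j)^2) :=
          Finset.sum_congr rfl fun i _ => Finset.sum_congr rfl fun j _ => by ring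
      _ = (∑ i, ∑ j, (Y i j)^2) - 2 * (∑ i, ∑ j, Y i j * Z i j) + ∑ i, ∑ j, (Z i j)^2 := by
          simp only [Finset.sum_add_distrib, Finset.sum_sub_distrib, ← Finset.mul_sum]
  have hinner : ∑ i, ∑ j, Y i j * Z i j = ∑ i, σ i * a i := by
    rw [hZ]; exact inner_UDV U V σ Y
  have hZsq : ∑ i, ∑ j, (Z i j)^2 = ∑ i, (σ i)^2 := by
    rw [hZ]; exact frob_UDV U V hU hV σ
  have hnuc : ∑ i, |a i| ≤ nuclearNorm Y := nuclear_ge U V hU hV Y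
  have hasq : ∑ i, (a i)^2 ≤ S := diag_sq_le U V hU hV Y
  set na := Real.sqrt (∑ i, (a i)^2) with hnadef
  clear_value S r na
  have hnale : na ≤ r := by
    rw [hnadef, hrdef]; exact Real.sqrt_le_sqrt hasq
  have hnann : 0 ≤ na := by rw [hnadef]; exact Real.sqrt_nonneg _
  have f1 : ∑ i, σ i * a i ≤ ∑ i, σ i * |a i| :=
    Finset.sum_le_sum fun i _ => mul_le_mul_of_nonneg_left (le_abs_self _) (hσnn i)
  have f2 : ∑ i, σ i * |a i| ≤ lam * (∑ i, |a i|) + ∑ i, w i * |a i| := by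
    rw [Finset.mul_sum, ← Finset.sum_add_distrib]
    apply Finset.sum_le_sum
    intro i _
    have h1 : σ i * |a i| ≤ (lam + w i) * |a i| :=
      mul_le_mul_of_nonneg_right (by linarith [hσw i]) (abs_nonneg _)
    have h2 : (lam + w i) * |a i| = lam * |a i| + w i * |a i| := by ring
    linarith
  have f3 : ∑ i, w i * |a i| ≤ nw * na := by
    have h := cs_abs w a
    have : ∑ i, w i * |a i| = ∑ i, |w i| * |a i| := by
      apply Finset.sum_congr rfl
      intro i _
      rw [abs_of_nonneg (hwnn i)]
    rw [this, hnwdef, hnadef, hnw2def]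
    exact h
  have f4 : nw * na ≤ nw * r := mul_le_mul_of_nonneg_left hnale hnwpos.le
  have f5 : lam * (∑ i, |a i|) ≤ lam * nuclearNorm Y :=
    mul_le_mul_of_nonneg_left hnuc hlam.le
  have f7 : 0 ≤ (r - (lam + nw))^2 := sq_nonneg _
  rw [hPsi Y, hexp, hinner, hZsq, hfrobY, hPsiX]
  nlinarith [f1, f2, f3, f4, f5, f7, hrsq]
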